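/- Let n ≥ 1. Then 12·∑_{j=1}^{n-1} (1+q^j)/[j]_q ≡ (n²-1)(1-q)²[n]_q modulo Φ_n(q)², in the sense that (12·∑_{j=1}^{n-1} (1+q^j)/[j]_q − (n²-1)(1-q)(1-q^n))·∏_{j=1}^{n-1}[j]_q is divisible by Φ_n(q)² in ℤ[q]. -/

import Mathlib

open Polynomial Finset

set_option maxHeartbeats 1000000

/-- The q-integer [j]_q = 1 + q + ⋯ + q^{j-1} as a polynomial over ℤ. -/
noncomputable def qInt (j : ℕ) : Polynomial ℤ := ∑ i ∈ Finset.range j, Polynomial.X ^ i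

private noncomputable def qIntQ (j : ℕ) : Polynomial ℚ := ∑ i ∈ Finset.range j, Polynomial.X ^ i

private lemma sum_range_cast (n : ℕ) : ∑ i ∈ range n, (i:ℂ) = n*(n-1)/2 := by
  induction n with
  | zero => simp
  | succ m ih => rw [Finset.sum_range_succ, ih]; push_cast; ring

private lemma sum_range_sq_cast (n : ℕ) : ∑ i ∈ range n, (i:ℂ)^2 = n*(n-1)*(2*n-1)/6 := by
  induction n with
  | zero => simp
  | succ m ih => rw [Finset.sum_range_succ, ih]; push_cast; ring

private lemma geom_zero {z : ℂ} (hz : z ≠ 1) {n : ℕ} (h : z^n = 1) :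
    ∑ i ∈ range n, z^i = 0 := by
  have h1 := geom_sum_mul z n
  rw [h, sub_self] at h1
  rcases mul_eq_zero.mp h1 with h2 | h2
  · exact h2
  · exact absurd (by linear_combination h2) hz

private lemma weighted_geom (z : ℂ) (m : ℕ) :
    (1 - z) * ∑ i ∈ range m, (i:ℂ) * z^i
      = (∑ i ∈ range m, z^i) - 1 - ((m:ℂ) - 1) * z^m := by
  induction m with
  | zero => simp
  | succ k ih =>
    rw [Finset.sum_range_succ, Finset.sum_range_succ (f := fun i => z ^ i), mul_add, ih]
    push_cast; ring

private lemma inv_one_sub {n : ℕ} (hn : n ≠ 0) {z : ℂ} (hz : z ≠ 1) (h : z^n = 1) :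
    (1 - z)⁻¹ = -(1/(n:ℂ)) * ∑ i ∈ range n, (i:ℂ) * z^i := by
  have hn0 : (n:ℂ) ≠ 0 := Nat.cast_ne_zero.mpr hn
  refine inv_eq_of_mul_eq_one_right ?_
  rw [mul_comm (-(1/(n:ℂ))) _, ← mul_assoc, weighted_geom, geom_zero hz h, h]
  field_simp
  ring

private lemma range_eq_insert_Icc {n : ℕ} (hn : 1 ≤ n) :
    range n = insert 0 (Icc 1 (n-1)) := by
  ext j; simp only [Finset.mem_range, Finset.mem_insert, Finset.mem_Icc]; omega

private lemma E_sum {n : ℕ} (hn : 2 ≤ n) {ζ : ℂ} (hζ : IsPrimitiveRoot ζ n) (m : ℕ) :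
    ∑ j ∈ Icc 1 (n-1), (ζ^m)^j = (if n ∣ m then (n:ℂ) else 0) - 1 := by
  have hr : ∑ j ∈ range n, (ζ^m)^j = if n ∣ m then (n:ℂ) else 0 := by
    by_cases h : n ∣ m
    · have h1 : ζ^m = 1 := (hζ.pow_eq_one_iff_dvd m).mpr h
      simp [h1, h]
    · have hne : ζ^m ≠ 1 := fun c => h ((hζ.pow_eq_one_iff_dvd m).mp c)
      have h2 : (ζ^m)^n = 1 := by
        rw [← pow_mul, mul_comm, pow_mul, hζ.pow_eq_one, one_pow]
      simp [geom_zero hne h2, h]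
  rw [range_eq_insert_Icc (by omega), Finset.sum_insert (by simp)] at hr
  rw [pow_zero] at hr
  linear_combination hr

private lemma dvd_iff_eq {n i i' : ℕ} (hi : i < n) (hi' : i' < n) :
    n ∣ (i + i' + 1) ↔ i' = n - 1 - i := by
  constructor
  · rintro ⟨k, hk⟩
    have hk0 : 0 < k := by
      rcases Nat.eq_zero_or_pos k with h | h
      · subst h; simp at hk
      · exact h
    have hk2 : k < 2 := by by_contra h; push_neg at h; nlinarith
    have : k = 1 := by omega
    subst this
    omega
  · intro h; exact ⟨1, by omega⟩

private lemma key_sum {n : ℕ} (hn : 2 ≤ n) {ζ : ℂ} (hζ : IsPrimitiveRoot ζ n) :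
    12 * ∑ j ∈ Icc 1 (n-1), ((1 - ζ^j)⁻¹ * (1 - ζ^(n-j))⁻¹) = (n:ℂ)^2 - 1 := by
  have hn0 : n ≠ 0 := by omega
  have hnC : (n:ℂ) ≠ 0 := Nat.cast_ne_zero.mpr hn0
  have hne1 : ∀ j ∈ Icc 1 (n-1), ζ^j ≠ 1 := by
    intro j hj hc
    rw [Finset.mem_Icc] at hj
    have h1 := (hζ.pow_eq_one_iff_dvd j).mp hc
    have := Nat.le_of_dvd (by omega) h1
    omega
  have hpow : ∀ j ∈ Icc 1 (n-1), (ζ^j)^n = 1 := by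
    intro j hj
    rw [← pow_mul, mul_comm, pow_mul, hζ.pow_eq_one, one_pow]
  have hstep : ∀ j ∈ Icc 1 (n-1),
      (1 - ζ^j)⁻¹ * (1 - ζ^(n-j))⁻¹
        = -(1/(n:ℂ)^2) * ∑ i ∈ range n, ∑ i' ∈ range n,
            (i:ℂ) * (i':ℂ) * (ζ^(i+i'+1))^j := by
    intro j hj
    have hjle : j ≤ n := by rw [Finset.mem_Icc] at hj; omega
    have hmul : ζ^(n-j) * ζ^j = 1 := by
      rw [← pow_add, Nat.sub_add_cancel hjle, hζ.pow_eq_one]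
    have hA : (1 - ζ^(n-j))⁻¹ = -ζ^j * (1 - ζ^j)⁻¹ := by
      have h1 : 1 - ζ^(n-j) = (-ζ^(n-j)) * (1 - ζ^j) := by linear_combination -hmul
      rw [h1, mul_inv]
      have h2 : (-ζ^(n-j))⁻¹ = -ζ^j :=
        inv_eq_of_mul_eq_one_right (by rw [neg_mul_neg, hmul])
      rw [h2]
    have hsq : (∑ i ∈ range n, (i:ℂ) * (ζ^j)^i) * (∑ i' ∈ range n, (i':ℂ) * (ζ^j)^i')
        = ∑ i ∈ range n, ∑ i' ∈ range n, ((i:ℂ) * (ζ^j)^i) * ((i':ℂ) * (ζ^j)^i') :=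
      Finset.sum_mul_sum _ _ _ _
    rw [hA, inv_one_sub hn0 (hne1 j hj) (hpow j hj)]
    have lhs_eq : (-(1/(n:ℂ)) * ∑ i ∈ range n, (i:ℂ) * (ζ^j)^i) *
        (-ζ^j * (-(1/(n:ℂ)) * ∑ i ∈ range n, (i:ℂ) * (ζ^j)^i))
        = -(1/(n:ℂ)^2) * (ζ^j *
          ∑ i ∈ range n, ∑ i' ∈ range n, ((i:ℂ) * (ζ^j)^i) * ((i':ℂ) * (ζ^j)^i')) := by
      rw [← hsq]; ring
    rw [lhs_eq, Finset.mul_sum]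
    congr 1
    refine Finset.sum_congr rfl fun i _ => ?_
    rw [Finset.mul_sum]
    refine Finset.sum_congr rfl fun i' _ => ?_
    have h3 : (ζ^(i+i'+1))^j = ζ^j * (ζ^j)^i * (ζ^j)^i' := by
      rw [← pow_mul, ← pow_mul, ← pow_mul, ← pow_add, ← pow_add]
      congr 1; ring
    rw [h3]; ring
  rw [Finset.sum_congr rfl hstep, ← Finset.mul_sum, Finset.sum_comm]
  have hswap : ∀ i ∈ range n,
      ∑ j ∈ Icc 1 (n-1), ∑ i' ∈ range n, (i:ℂ) * (i':ℂ) * (ζ^(i+i'+1))^j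
        = ((n:ℂ)*((n:ℂ)-1) - (n:ℂ)*((n:ℂ)-1)/2) * (i:ℂ) - (n:ℂ) * (i:ℂ)^2 := by
    intro i hi
    rw [Finset.sum_comm]
    have hinner : ∀ i' ∈ range n,
        ∑ j ∈ Icc 1 (n-1), (i:ℂ) * (i':ℂ) * (ζ^(i+i'+1))^j
          = (if i' = n-1-i then (i:ℂ) * (i':ℂ) * (n:ℂ) else 0) - (i:ℂ) * (i':ℂ) := by
      intro i' hi'
      rw [← Finset.mul_sum, E_sum hn hζ]
      rw [Finset.mem_range] at hi hi'
      simp only [dvd_iff_eq hi hi']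
      by_cases h : i' = n-1-i <;> simp [h] <;> ring
    rw [Finset.sum_congr rfl hinner, Finset.sum_sub_distrib,
      Finset.sum_ite_eq' (range n) (n-1-i) (fun i' => (i:ℂ) * (i':ℂ) * (n:ℂ))]
    rw [Finset.mem_range] at hi
    rw [if_pos (by rw [Finset.mem_range]; omega : n-1-i ∈ range n)]
    have hcast : ((n-1-i : ℕ) : ℂ) = (n:ℂ) - 1 - (i:ℂ) := by
      rw [Nat.cast_sub (show i ≤ n-1 by omega), Nat.cast_sub (show 1 ≤ n by omega)]
      push_cast; ring
    rw [hcast, ← Finset.mul_sum, sum_range_cast]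
    ring
  rw [Finset.sum_congr rfl hswap, Finset.sum_sub_distrib, ← Finset.mul_sum, ← Finset.mul_sum,
    sum_range_cast, sum_range_sq_cast]
  field_simp
  ring

private lemma quot_main {B : Type*} [CommRing B] (n : ℕ) (hn2 : 2 ≤ n) (x c : B) (W : ℕ → B)
    (hxu : ∀ k ∈ Icc 1 (n-1), IsUnit (1 - x^k))
    (hWx : ∀ k ∈ Icc 1 (n-1), (1 - x^k) * W k = 1)
    (h2u : IsUnit (2:B))
    (huz : (1 - x^n) * (12 * (∑ j ∈ Icc 1 (n-1), W j * W (n-j)) - c) = 0) :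
    12 * ∑ j ∈ Icc 1 (n-1), (1 + x^j) * W j = c * (1 - x^n) := by
  set S := Finset.Icc 1 (n-1) with hSdef
  have hnj : ∀ j ∈ S, n - j ∈ S := by
    intro j hj
    rw [hSdef, Finset.mem_Icc] at hj ⊢
    omega
  have hxn : ∀ j ∈ S, x^j * x^(n-j) = x^n := by
    intro j hj
    rw [hSdef, Finset.mem_Icc] at hj
    rw [← pow_add]
    congr 1
    omega
  have hpair : ∀ j ∈ S, (1 + x^j) * W j + (1 + x^(n-j)) * W (n-j)
      = 2 * (1 - x^n) * (W j * W (n-j)) := by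
    intro j hj
    have huu : IsUnit ((1 - x^j) * (1 - x^(n-j))) := (hxu j hj).mul (hxu _ (hnj j hj))
    refine (huu.mul_right_inj).mp ?_
    have e1 : (1 - x^j) * (1 - x^(n-j)) * ((1 + x^j) * W j + (1 + x^(n-j)) * W (n-j))
        = (1 + x^j) * (1 - x^(n-j)) * ((1 - x^j) * W j)
          + (1 + x^(n-j)) * (1 - x^j) * ((1 - x^(n-j)) * W (n-j)) := by ring
    have e2 : (1 - x^j) * (1 - x^(n-j)) * (2 * (1 - x^n) * (W j * W (n-j)))
        = 2 * (1 - x^n) * (((1 - x^j) * W j) * ((1 - x^(n-j)) * W (n-j))) := by ring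
    rw [e1, e2, hWx j hj, hWx _ (hnj j hj), mul_one, mul_one, mul_one]
    linear_combination (-2 : B) * hxn j hj
  have hre : ∑ j ∈ S, (1 + x^j) * W j = ∑ j ∈ S, (1 + x^(n-j)) * W (n-j) := by
    refine Finset.sum_bij' (fun j _ => n - j) (fun j _ => n - j)
      (fun a ha => hnj a ha) (fun a ha => hnj a ha) ?_ ?_ ?_
    · intro a ha; rw [hSdef, Finset.mem_Icc] at ha; show n - (n - a) = a; omega
    · intro a ha; rw [hSdef, Finset.mem_Icc] at ha; show n - (n - a) = a; omega
    · intro a ha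
      rw [hSdef, Finset.mem_Icc] at ha
      have h : n - (n - a) = a := by omega
      rw [h]
  have hA : ∑ j ∈ S, (1 + x^j) * W j = (1 - x^n) * ∑ j ∈ S, W j * W (n-j) := by
    refine (h2u.mul_right_inj).mp ?_
    calc (2:B) * ∑ j ∈ S, (1 + x^j) * W j
        = ∑ j ∈ S, (1 + x^j) * W j + ∑ j ∈ S, (1 + x^(n-j)) * W (n-j) := by
          rw [← hre]; ring
      _ = ∑ j ∈ S, ((1 + x^j) * W j + (1 + x^(n-j)) * W (n-j)) := by
          rw [Finset.sum_add_distrib]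
      _ = ∑ j ∈ S, 2 * (1 - x^n) * (W j * W (n-j)) := Finset.sum_congr rfl hpair
      _ = 2 * ((1 - x^n) * ∑ j ∈ S, W j * W (n-j)) := by
          rw [Finset.mul_sum, Finset.mul_sum]
          exact Finset.sum_congr rfl fun j _ => by ring
  rw [hA]
  linear_combination huz

private theorem main_q (n : ℕ) (hn2 : 2 ≤ n) :
    (Polynomial.cyclotomic n ℚ) ^ 2 ∣
      12 * ∑ j ∈ Finset.Icc 1 (n - 1),
          ((1 : Polynomial ℚ) + Polynomial.X ^ j) * ∏ k ∈ (Finset.Icc 1 (n - 1)).erase j, qIntQ k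
        - ((n : Polynomial ℚ)^2 - 1) * (((1 : Polynomial ℚ) - Polynomial.X)
            * ((1 : Polynomial ℚ) - Polynomial.X ^ n))
          * ∏ j ∈ Finset.Icc 1 (n - 1), qIntQ j := by
  have hn0 : n ≠ 0 := by omega
  have hnpos : 0 < n := by omega
  set ζ : ℂ := Complex.exp (2 * Real.pi * Complex.I / n) with hζdef
  have hζ : IsPrimitiveRoot ζ n := Complex.isPrimitiveRoot_exp n hn0
  have hmin : cyclotomic n ℚ = minpoly ℚ ζ := cyclotomic_eq_minpoly_rat hζ hnpos
  have haevalΦ : aeval ζ (cyclotomic n ℚ) = 0 := by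
    rw [hmin]; exact minpoly.aeval ℚ ζ
  set Φ : ℚ[X] := cyclotomic n ℚ with hΦdef
  rw [← Ideal.Quotient.eq_zero_iff_dvd]
  set mkq : ℚ[X] →+* (ℚ[X] ⧸ Ideal.span {Φ^2}) := Ideal.Quotient.mk (Ideal.span {Φ^2}) with hmkqdef
  -- the evaluation map π down to ℂ
  have hker : ∀ p ∈ Ideal.span {Φ^2}, (Polynomial.aeval ζ).toRingHom p = 0 := by
    intro p hp
    rw [Ideal.mem_span_singleton] at hp
    obtain ⟨g, rfl⟩ := hp
    simp [map_mul, map_pow, haevalΦ]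
  set π : (ℚ[X] ⧸ Ideal.span {Φ^2}) →+* ℂ :=
    Ideal.Quotient.lift (Ideal.span {Φ^2}) (Polynomial.aeval ζ).toRingHom hker with hπdef
  have hπ : ∀ p : ℚ[X], π (mkq p) = aeval ζ p := fun p => Ideal.Quotient.lift_mk _ _ _
  -- units
  have hunit : ∀ p : ℚ[X], aeval ζ p ≠ 0 → IsUnit (mkq p) := by
    intro p hp
    have h1 : ¬ Φ ∣ p := by
      intro hdvd
      obtain ⟨g, rfl⟩ := hdvd
      exact hp (by rw [map_mul, haevalΦ, zero_mul])
    have h2 : IsCoprime (Φ^2) p :=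
      ((((cyclotomic.irreducible_rat hnpos).coprime_iff_not_dvd).mpr h1)).pow_left
    obtain ⟨a, b, hab⟩ := h2
    refine IsUnit.of_mul_eq_one (mkq b) ?_
    have h0 : mkq (Φ^2) = 0 := (Ideal.Quotient.eq_zero_iff_dvd _ _).mpr dvd_rfl
    have h3 := congrArg mkq hab
    rw [map_add, map_mul, map_mul, h0, mul_zero, zero_add, map_one] at h3
    rw [mul_comm]; exact h3
  set S := Finset.Icc 1 (n-1) with hSdef
  set x := mkq X with hxdef
  set Q : ℕ → (ℚ[X] ⧸ Ideal.span {Φ^2}) := fun k => mkq (qIntQ k) with hQdef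
  set W : ℕ → (ℚ[X] ⧸ Ideal.span {Φ^2}) := fun k => Ring.inverse (1 - x^k) with hWdef
  -- basic facts
  have hζk : ∀ k ∈ S, ζ^k ≠ 1 := by
    intro k hk hc
    rw [hSdef, Finset.mem_Icc] at hk
    have h1 := (hζ.pow_eq_one_iff_dvd k).mp hc
    have := Nat.le_of_dvd (by omega) h1
    omega
  have hmk1x : ∀ k : ℕ, mkq (1 - X^k) = 1 - x^k := by
    intro k; rw [map_sub, map_one, map_pow]
  have hxu : ∀ k ∈ S, IsUnit (1 - x^k) := by
    intro k hk
    rw [← hmk1x]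
    refine hunit _ ?_
    rw [map_sub, map_one, map_pow, aeval_X]
    intro hc
    exact hζk k hk (by linear_combination -hc)
  have h1xu : IsUnit (1 - x) := by
    have h := hxu 1 (by rw [hSdef, Finset.mem_Icc]; omega)
    rwa [pow_one] at h
  have hgeom : ∀ k : ℕ, (1 - x) * Q k = 1 - x^k := by
    intro k
    have hg : ((1:ℚ[X]) - X) * qIntQ k = 1 - X^k := by
      have := geom_sum_mul (X : ℚ[X]) k
      rw [qIntQ]
      linear_combination -this
    rw [hQdef]
    calc (1 - x) * mkq (qIntQ k) = mkq (((1:ℚ[X]) - X) * qIntQ k) := by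
          rw [map_mul, map_sub, map_one]
      _ = 1 - x^k := by rw [hg, hmk1x]
  have hQu : ∀ k ∈ S, IsUnit (Q k) := by
    intro k hk
    exact isUnit_of_mul_isUnit_right (x := 1 - x) (by rw [hgeom k]; exact hxu k hk)
  have hWx : ∀ k ∈ S, (1 - x^k) * W k = 1 := fun k hk =>
    Ring.mul_inverse_cancel _ (hxu k hk)
  have hπx : ∀ k : ℕ, π (1 - x^k) = 1 - ζ^k := by
    intro k
    rw [← hmk1x, hπ, map_sub, map_one, map_pow, aeval_X]
  have hπW : ∀ k ∈ S, π (W k) = (1 - ζ^k)⁻¹ := by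
    intro k hk
    have h1 := congrArg π (hWx k hk)
    rw [map_mul, map_one, hπx] at h1
    exact (inv_eq_of_mul_eq_one_right h1).symm
  have hnj : ∀ j ∈ S, n - j ∈ S := by
    intro j hj
    rw [hSdef, Finset.mem_Icc] at hj ⊢
    omega
  -- reduce the goal
  have herase : ∀ j ∈ S, mkq (∏ k ∈ S.erase j, qIntQ k) = ((1-x) * W j) * ∏ k ∈ S, Q k := by
    intro j hj
    rw [map_prod]
    have h1 : ∏ k ∈ S.erase j, mkq (qIntQ k) = ∏ k ∈ S.erase j, Q k := rfl
    rw [h1, ← Finset.mul_prod_erase S Q hj]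
    have h2 : ((1-x) * W j) * (Q j * ∏ k ∈ S.erase j, Q k)
        = (W j * ((1-x) * Q j)) * ∏ k ∈ S.erase j, Q k := by ring
    rw [h2, hgeom j, mul_comm (W j) _, hWx j hj, one_mul]
  -- push mkq through the goal
  rw [map_sub, map_mul, map_mul, map_mul, map_sum]
  have hsum1 : ∀ j ∈ S, mkq ((1 + X^j) * ∏ k ∈ S.erase j, qIntQ k)
      = (1 + x^j) * (((1-x) * W j) * ∏ k ∈ S, Q k) := by
    intro j hj
    rw [map_mul, map_add, map_one, map_pow, herase j hj]
  rw [Finset.sum_congr rfl hsum1]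
  have hc' : mkq ((n : ℚ[X])^2 - 1) = (n : _)^2 - 1 := by
    rw [map_sub, map_one, map_pow, map_natCast]
  rw [hc']
  have h1mx : mkq (1 - X) = 1 - x := by rw [map_sub, map_one]
  rw [map_mul, h1mx, hmk1x n, map_prod]
  have hQprod : ∏ j ∈ S, mkq (qIntQ j) = ∏ j ∈ S, Q j := rfl
  rw [hQprod]
  rw [show (mkq 12 : ℚ[X] ⧸ Ideal.span {Φ^2}) = 12 from map_ofNat mkq 12]
  -- now a pure quotient-ring computation
  set P : (ℚ[X] ⧸ Ideal.span {Φ^2}) := ∏ j ∈ S, Q j with hPdef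
  set c : (ℚ[X] ⧸ Ideal.span {Φ^2}) := (n : _)^2 - 1 with hcdef
  -- main identity
  have hu0 : ∀ y, π y = 0 → (1 - x^n) * y = 0 := by
    intro y hy
    obtain ⟨g, rfl⟩ := Ideal.Quotient.mk_surjective y
    have hg : π (mkq g) = aeval ζ g := hπ g
    have hdvd : Φ ∣ g := by
      rw [hmin]
      exact minpoly.dvd ℚ ζ (by rw [← hg]; exact hy)
    obtain ⟨h, rfl⟩ := hdvd
    have h2 : Φ ∣ (1 - X^n : ℚ[X]) := by
      rw [show (1:ℚ[X]) - X^n = -(X^n - 1) by ring]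
      exact dvd_neg.mpr (cyclotomic.dvd_X_pow_sub_one n ℚ)
    obtain ⟨w, hw⟩ := h2
    have h3 : (1 - x^n) * mkq (Φ * h) = mkq ((1 - X^n) * (Φ * h)) := by
      rw [map_mul mkq (1 - X^n) (Φ * h), hmk1x]
    rw [h3]
    refine (Ideal.Quotient.eq_zero_iff_dvd _ _).mpr ⟨w * h, ?_⟩
    rw [hw]; ring
  have h2u : IsUnit (2 : ℚ[X] ⧸ Ideal.span {Φ^2}) := by
    rw [← map_ofNat mkq 2]
    refine hunit _ ?_
    rw [map_ofNat]
    norm_num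
  have hπ0 : π (12 * (∑ j ∈ S, W j * W (n-j)) - c) = 0 := by
    rw [map_sub, map_mul, map_sum]
    have : ∀ j ∈ S, π (W j * W (n-j)) = (1 - ζ^j)⁻¹ * (1 - ζ^(n-j))⁻¹ := by
      intro j hj
      rw [map_mul, hπW j hj, hπW _ (hnj j hj)]
    rw [Finset.sum_congr rfl this]
    have h12 : π (12 : ℚ[X] ⧸ Ideal.span {Φ^2}) = 12 := map_ofNat π 12
    have hcπ : π c = (n:ℂ)^2 - 1 := by
      rw [hcdef, map_sub, map_one, map_pow, map_natCast]
    rw [h12, hcπ, key_sum hn2 hζ]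
    ring
  have huz : (1 - x^n) * (12 * (∑ j ∈ S, W j * W (n-j)) - c) = 0 := hu0 _ hπ0
  -- final assembly
  have hS2 : 12 * ∑ j ∈ S, (1 + x^j) * W j = c * (1 - x^n) :=
    quot_main n hn2 x c W hxu hWx h2u huz
  have hfin : ∑ j ∈ S, (1 + x^j) * (((1-x) * W j) * P)
      = (∑ j ∈ S, (1 + x^j) * W j) * ((1-x) * P) := by
    rw [Finset.sum_mul]
    exact Finset.sum_congr rfl fun j _ => by ring
  rw [hfin]
  have : (12 : ℚ[X] ⧸ Ideal.span {Φ^2}) * ((∑ j ∈ S, (1 + x^j) * W j) * ((1-x) * P))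
      - c * ((1-x) * (1-x^n)) * P
      = (12 * ∑ j ∈ S, (1 + x^j) * W j - c * (1-x^n)) * ((1-x) * P) := by ring
  rw [this, hS2, sub_self, zero_mul]

theorem q_wolstenholme_companion (n : ℕ) (hn : 1 ≤ n) :
    (Polynomial.cyclotomic n ℤ) ^ 2 ∣
      12 * ∑ j ∈ Finset.Icc 1 (n - 1),
          ((1 : Polynomial ℤ) + Polynomial.X ^ j) * ∏ k ∈ (Finset.Icc 1 (n - 1)).erase j, qInt k
        - ((n^2 - 1 : ℤ)) • (((1 : Polynomial ℤ) - Polynomial.X)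
            * ((1 : Polynomial ℤ) - Polynomial.X ^ n))
          * ∏ j ∈ Finset.Icc 1 (n - 1), qInt j := by
  rcases eq_or_lt_of_le hn with h1 | hn2
  · -- n = 1
    obtain rfl : n = 1 := h1.symm
    simp [Finset.Icc_eq_empty_of_lt (by norm_num : (0:ℕ) < 1)]
  have hn0 : n ≠ 0 := by omega
  have hnpos : 0 < n := by omega
  -- the primitive root
  set ζ : ℂ := Complex.exp (2 * Real.pi * Complex.I / n) with hζdef
  have hζ : IsPrimitiveRoot ζ n := Complex.isPrimitiveRoot_exp n hn0
  have hmin : cyclotomic n ℚ = minpoly ℚ ζ := cyclotomic_eq_minpoly_rat hζ hnpos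
  have haevalΦ : aeval ζ (cyclotomic n ℚ) = 0 := by
    rw [hmin]; exact minpoly.aeval ℚ ζ
  -- reduce to ℚ
  rw [← map_dvd_map (Int.castRingHom ℚ) (fun a b h => by simpa using h)
      ((cyclotomic.monic n ℤ).pow 2)]
  rw [Polynomial.map_pow, map_cyclotomic]
  have hmapeq : Polynomial.map (Int.castRingHom ℚ)
      (12 * ∑ j ∈ Finset.Icc 1 (n - 1),
          ((1 : Polynomial ℤ) + Polynomial.X ^ j) * ∏ k ∈ (Finset.Icc 1 (n - 1)).erase j, qInt k
        - ((n^2 - 1 : ℤ)) • (((1 : Polynomial ℤ) - Polynomial.X)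
            * ((1 : Polynomial ℤ) - Polynomial.X ^ n))
          * ∏ j ∈ Finset.Icc 1 (n - 1), qInt j)
      = 12 * ∑ j ∈ Finset.Icc 1 (n - 1),
          ((1 : Polynomial ℚ) + Polynomial.X ^ j) * ∏ k ∈ (Finset.Icc 1 (n - 1)).erase j, qIntQ k
        - ((n : Polynomial ℚ)^2 - 1) * (((1 : Polynomial ℚ) - Polynomial.X)
            * ((1 : Polynomial ℚ) - Polynomial.X ^ n))
          * ∏ j ∈ Finset.Icc 1 (n - 1), qIntQ j := by
    simp only [zsmul_eq_mul, Polynomial.map_sub, Polynomial.map_mul, Polynomial.map_add,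
      Polynomial.map_pow, Polynomial.map_one, Polynomial.map_X, Polynomial.map_ofNat,
      Polynomial.map_intCast, Polynomial.map_sum, Polynomial.map_prod, qInt, qIntQ]
    push_cast
    ring
  rw [hmapeq]
  exact main_q n hn2
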